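/- Openness of spaces of controlled probability measures supported on a big family (established in the proof that the coarsification functor Q is excisive): Let X be a set with the discrete topology, let C₀(X) denote the real-valued continuous functions on X vanishing at infinity with the supremum norm, and let U ⊆ X × X. For S ⊆ X let P_U(S) denote the set of continuous linear functionals μ on C₀(X) of the form μ(f) = ∑_{x∈X} p(x) f(x) for some p : X → [0,∞) with ∑_{x∈X} p(x) = 1, supp(p) ⊆ S and supp(p) × supp(p) ⊆ U. Let Y ⊆ Y' ⊆ X satisfy U[Y] ⊆ Y'. Then there exists a weak-*-open subset O of the continuous dual of C₀(X) such that P_U(Y) ⊆ O and O ∩ P_U(X) ⊆ P_U(Y'); in other words, P_U(Y') contains an open neighbourhood of P_U(Y) in the subspace P_U(X) of the weak-* topology. -/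

import Mathlib

open scoped ZeroAtInfty

/-- The `U`-thickening `U[B] := {x : ∃ b ∈ B, (x, b) ∈ U}` of a subset `B`. -/
def thick {X : Type*} (U : Set (X × X)) (B : Set X) : Set X :=
  {x | ∃ b ∈ B, (x, b) ∈ U}

/-- `P_U(S)`: the set of continuous linear functionals on `C₀(X, ℝ)` given by probability
measures `p` whose support is contained in `S` and is `U`-bounded, regarded inside the
continuous dual with its weak-* topology. -/
def probMeasOn (X : Type*) [TopologicalSpace X] [DiscreteTopology X]
    (U : Set (X × X)) (S : Set X) : Set (WeakDual ℝ C₀(X, ℝ)) :=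
  {μ | ∃ p : X → ℝ, (∀ x : X, 0 ≤ p x) ∧ HasSum p 1 ∧
    Function.support p ⊆ S ∧ (Function.support p) ×ˢ (Function.support p) ⊆ U ∧
    ∀ f : C₀(X, ℝ), μ f = ∑' x : X, p x * f x}

open Classical in
/-- The indicator of a singleton as an element of `C₀(X, ℝ)` for discrete `X`. -/
noncomputable def deltaFn {X : Type*} [TopologicalSpace X] [DiscreteTopology X] (y : X) :
    C₀(X, ℝ) where
  toFun x := if x = y then 1 else 0
  continuous_toFun := continuous_of_discreteTopology
  zero_at_infty' := by
    have hmem : ({y}ᶜ : Set X) ∈ Filter.cocompact X :=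
      Filter.mem_cocompact.2 ⟨{y}, isCompact_singleton, subset_rfl⟩
    refine Filter.Tendsto.congr' ?_ tendsto_const_nhds
    filter_upwards [hmem] with x hx
    simp only [Set.mem_compl_iff, Set.mem_singleton_iff] at hx
    simp [hx]

open Classical in
lemma deltaFn_apply {X : Type*} [TopologicalSpace X] [DiscreteTopology X] (y x : X) :
    deltaFn y x = if x = y then 1 else 0 := by
  simp [deltaFn]

lemma tsum_mul_deltaFn {X : Type*} [TopologicalSpace X] [DiscreteTopology X]
    (p : X → ℝ) (hsum : HasSum p 1) (y : X) :
    ∑' x : X, p x * deltaFn y x = p y := by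
  classical
  have h : ∀ x : X, p x * deltaFn y x = if x = y then p x else 0 := by
    intro x
    rw [deltaFn_apply]
    by_cases hx : x = y <;> simp [hx]
  rw [tsum_congr h]
  rw [tsum_eq_single (f := fun x => if x = y then p x else 0) y fun b hb => if_neg hb, if_pos rfl]

/-- If `Y ⊆ Y' ⊆ X` and `U[Y] ⊆ Y'`, then `P_U(Y')` contains a weak-*-open neighbourhood of
`P_U(Y)` inside the subspace `P_U(X)` of the dual of `C₀(X, ℝ)`. -/
theorem probMeasOn_open_neighbourhood {X : Type*} [TopologicalSpace X] [DiscreteTopology X]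
    (U : Set (X × X)) (Y Y' : Set X) (hYY' : Y ⊆ Y') (hUY : thick U Y ⊆ Y') :
    ∃ O : Set (WeakDual ℝ C₀(X, ℝ)), IsOpen O ∧ probMeasOn X U Y ⊆ O ∧
      O ∩ probMeasOn X U Set.univ ⊆ probMeasOn X U Y' := by
  classical
  refine ⟨⋃ y ∈ Y, {μ : WeakDual ℝ C₀(X, ℝ) | 0 < μ (deltaFn y)}, ?_, ?_, ?_⟩
  · refine isOpen_biUnion fun y _ => ?_
    have : Continuous fun μ : WeakDual ℝ C₀(X, ℝ) => μ (deltaFn y) :=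
      WeakDual.eval_continuous _
    exact isOpen_lt continuous_const this
  · rintro μ ⟨p, hp0, hsum, hsupp, hU, heval⟩
    -- there is some y with p y > 0
    have hne : ∃ y, p y ≠ 0 := by
      by_contra h
      push_neg at h
      have : HasSum p 0 := by
        have : p = 0 := funext h
        rw [this]
        exact hasSum_zero
      exact absurd (hsum.unique this) one_ne_zero
    obtain ⟨y, hy⟩ := hne
    have hyY : y ∈ Y := hsupp hy
    refine Set.mem_biUnion hyY ?_
    have : μ (deltaFn y) = p y := by rw [heval, tsum_mul_deltaFn p hsum]
    simp only [Set.mem_setOf_eq, this]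
    exact lt_of_le_of_ne (hp0 y) (Ne.symm hy)
  · rintro μ ⟨hO, p, hp0, hsum, _, hU, heval⟩
    obtain ⟨y, hyY, hyμ⟩ := Set.mem_iUnion₂.1 hO
    have hpy : 0 < p y := by
      have : μ (deltaFn y) = p y := by rw [heval, tsum_mul_deltaFn p hsum]
      simpa [this] using hyμ
    have hysupp : y ∈ Function.support p := ne_of_gt hpy
    refine ⟨p, hp0, hsum, ?_, hU, heval⟩
    intro x hx
    exact hUY ⟨y, hyY, hU ⟨hx, hysupp⟩⟩
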